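/- Let X be a Banach space, U an evolution family on X, and Q : [0,∞) → L(X) a family of isomorphisms such that Q is strongly C¹-differentiable and Q⁻¹ is strongly continuous, and set W(t,s) := Q(t)⁻¹ U(t,s) Q(s). Then U is generated by a family {A(t) : t ≥ 0} with regularity spaces {Y_t : t ≥ 0} if and only if W is generated by the family A_Q := {Q(t)⁻¹A(t)Q(t) − Q(t)⁻¹Q̇(t) : t ≥ 0}, where D(Q(t)⁻¹A(t)Q(t)) = {x ∈ X : Q(t)x ∈ D(A(t))}, with regularity spaces Ỹ_t := {x ∈ X : Q(t)x ∈ Y_t}. -/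

import Mathlib

open Set Filter MeasureTheory
open scoped ComplexInnerProductSpace

noncomputable section

namespace NBCS

/-! ### Evolution families and non-autonomous Cauchy problems -/

section NormedDefs

variable {X U Y : Type*}
variable [NormedAddCommGroup X] [NormedSpace ℂ X]
variable [NormedAddCommGroup U] [NormedSpace ℂ U]
variable [NormedAddCommGroup Y] [NormedSpace ℂ Y]

/-- An evolution family on `X`, indexed by `Δ = {(t,s) : 0 ≤ s ≤ t}`. -/
def IsEvolutionFamily (W : ℝ → ℝ → X →L[ℂ] X) : Prop :=
  (∀ t, 0 ≤ t → W t t = 1) ∧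
  (∀ s r t : ℝ, 0 ≤ s → s ≤ r → r ≤ t → W t s = (W t r).comp (W r s)) ∧
  (∀ x : X, ContinuousOn (fun p : ℝ × ℝ => W p.1 p.2 x) {p : ℝ × ℝ | 0 ≤ p.2 ∧ p.2 ≤ p.1})

/-- A backward evolution family on `X`. -/
def IsBackwardEvolutionFamily (V : ℝ → ℝ → X →L[ℂ] X) : Prop :=
  (∀ t, 0 ≤ t → V t t = 1) ∧
  (∀ s r t : ℝ, 0 ≤ s → s ≤ r → r ≤ t → V t s = (V r s).comp (V t r)) ∧
  (∀ x : X, ContinuousOn (fun p : ℝ × ℝ => V p.1 p.2 x) {p : ℝ × ℝ | 0 ≤ p.2 ∧ p.2 ≤ p.1})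

/-- A classical solution (continuous on `[s,∞)`, `C¹` on `(s,∞)`) of the inhomogeneous
non-autonomous Cauchy problem `ẋ(t) = A(t)x(t) + F(t)` on `[s,∞)`, `x(s) = xs`, where the
(in general unbounded) operator `A(t)` is encoded by a globally defined linear map together
with its domain `domA t`. -/
def IsClassicalSolution (A : ℝ → X →ₗ[ℂ] X) (domA : ℝ → Submodule ℂ X)
    (F : ℝ → X) (s : ℝ) (xs : X) (x : ℝ → X) : Prop :=
  ContinuousOn x (Ici s) ∧ x s = xs ∧ (∀ t, s ≤ t → x t ∈ domA t) ∧
  (∀ t, s < t → HasDerivAt x (A t (x t) + F t) t) ∧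
  ContinuousOn (fun t => A t (x t) + F t) (Ioi s)

/-- A classical solution which is `C¹` up to the initial time `s`. -/
def IsClassicalSolutionC1 (A : ℝ → X →ₗ[ℂ] X) (domA : ℝ → Submodule ℂ X)
    (F : ℝ → X) (s : ℝ) (xs : X) (x : ℝ → X) : Prop :=
  x s = xs ∧ (∀ t, s ≤ t → x t ∈ domA t) ∧
  (∀ t, s ≤ t → HasDerivWithinAt x (A t (x t) + F t) (Ici s) t) ∧
  ContinuousOn (fun t => A t (x t) + F t) (Ici s)

/-- The family `{A(t)}` generates the evolution family `W` with regularity spaces `Yreg`. -/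
def Generates (A : ℝ → X →ₗ[ℂ] X) (domA : ℝ → Submodule ℂ X)
    (W : ℝ → ℝ → X →L[ℂ] X) (Yreg : ℝ → Submodule ℂ X) : Prop :=
  IsEvolutionFamily W ∧
  (∀ t, 0 ≤ t → Dense (Yreg t : Set X)) ∧
  (∀ t, 0 ≤ t → Yreg t ≤ domA t) ∧
  (∀ s t : ℝ, 0 ≤ s → s ≤ t → ∀ x ∈ Yreg s, W t s x ∈ Yreg t) ∧
  (∀ s, 0 ≤ s → ∀ xs ∈ Yreg s,
    IsClassicalSolution A domA (fun _ => 0) s xs (fun t => W t s xs)) ∧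
  (∀ s, 0 ≤ s → ∀ xs ∈ Yreg s, ∀ x, IsClassicalSolution A domA (fun _ => 0) s xs x →
    ∀ t, s ≤ t → x t = W t s xs)

/-- A classical solution of the backward problem `u'(s) = -A(s)u(s)` on `[0,t]`, `u(t) = xt`. -/
def IsBackwardSolution (A : ℝ → X →ₗ[ℂ] X) (domA : ℝ → Submodule ℂ X)
    (t : ℝ) (xt : X) (u : ℝ → X) : Prop :=
  u t = xt ∧ (∀ s ∈ Icc (0:ℝ) t, u s ∈ domA s) ∧
  (∀ s ∈ Icc (0:ℝ) t, HasDerivWithinAt u (-(A s (u s))) (Icc (0:ℝ) t) s) ∧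
  ContinuousOn (fun s => A s (u s)) (Icc (0:ℝ) t)

/-- The family `{A(t)}` generates the backward evolution family `V` with
regularity spaces `Yreg`. -/
def GeneratesBackward (A : ℝ → X →ₗ[ℂ] X) (domA : ℝ → Submodule ℂ X)
    (V : ℝ → ℝ → X →L[ℂ] X) (Yreg : ℝ → Submodule ℂ X) : Prop :=
  IsBackwardEvolutionFamily V ∧
  (∀ t, 0 ≤ t → Dense (Yreg t : Set X)) ∧
  (∀ t, 0 ≤ t → Yreg t ≤ domA t) ∧
  (∀ s t : ℝ, 0 ≤ s → s ≤ t → ∀ x ∈ Yreg t, V t s x ∈ Yreg s) ∧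
  (∀ t, 0 ≤ t → ∀ xt ∈ Yreg t, IsBackwardSolution A domA t xt (fun s => V t s xt)) ∧
  (∀ t, 0 ≤ t → ∀ xt ∈ Yreg t, ∀ u, IsBackwardSolution A domA t xt u →
    ∀ s ∈ Icc (0:ℝ) t, u s = V t s xt)

/-! ### `C₀`-semigroups and Kato's classes -/

/-- `T` is a strongly continuous one-parameter semigroup on `X`. -/
def IsC0Semigroup (T : ℝ → X →L[ℂ] X) : Prop :=
  T 0 = 1 ∧ (∀ s t : ℝ, 0 ≤ s → 0 ≤ t → T (s + t) = (T s).comp (T t)) ∧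
  ∀ x : X, ContinuousOn (fun t => T t x) (Ici (0:ℝ))

/-- `A` (with domain `domA`) is the generator of the `C₀`-semigroup `T`. -/
def IsGenerator (A : X →ₗ[ℂ] X) (domA : Submodule ℂ X) (T : ℝ → X →L[ℂ] X) : Prop :=
  IsC0Semigroup T ∧
  (∀ x : X, x ∈ domA ↔
    ∃ y, Tendsto (fun h : ℝ => h⁻¹ • (T h x - x)) (nhdsWithin 0 (Ioi 0)) (nhds y)) ∧
  (∀ x ∈ domA, Tendsto (fun h : ℝ => h⁻¹ • (T h x - x)) (nhdsWithin 0 (Ioi 0)) (nhds (A x)))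

/-- `A` generates a contraction `C₀`-semigroup on `X` (with respect to the given norm). -/
def GeneratesContractionSemigroup (A : X →ₗ[ℂ] X) (domA : Submodule ℂ X) : Prop :=
  ∃ T : ℝ → X →L[ℂ] X, IsGenerator A domA T ∧ ∀ t, 0 ≤ t → ‖T t‖ ≤ 1

/-- `A` generates a `C₀`-semigroup on `X` which is contractive with respect to the
(equivalent) norm `N`. -/
def GeneratesContractionSemigroupWrt (N : X → ℝ) (A : X →ₗ[ℂ] X) (domA : Submodule ℂ X) :
    Prop :=
  ∃ T : ℝ → X →L[ℂ] X, IsGenerator A domA T ∧ ∀ t, 0 ≤ t → ∀ x : X, N (T t x) ≤ N x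

/-- `N` is a norm on `X` which is equivalent to the original norm. -/
def IsEquivNorm (N : X → ℝ) : Prop :=
  (∀ x y : X, N (x + y) ≤ N x + N y) ∧ (∀ (c : ℂ) (x : X), N (c • x) = ‖c‖ * N x) ∧
  (∀ x : X, N x = 0 ↔ x = 0) ∧
  ∃ m M : ℝ, 0 < m ∧ 0 < M ∧ ∀ x : X, m * ‖x‖ ≤ N x ∧ N x ≤ M * ‖x‖

/-- The family `{A(t)}` is Kato-stable. -/
def KatoStable (A : ℝ → X →ₗ[ℂ] X) (domA : ℝ → Submodule ℂ X) : Prop :=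
  ∃ N : ℝ → X → ℝ,
    (∀ t, 0 ≤ t → IsEquivNorm (N t)) ∧
    (∀ T : ℝ, 0 ≤ T → ∃ c : ℝ, 0 ≤ c ∧ ∀ (x : X), ∀ s ∈ Icc (0:ℝ) T, ∀ t ∈ Icc (0:ℝ) T,
      |N t x - N s x| ≤ c * |t - s| * N s x) ∧
    (∀ t, 0 ≤ t → GeneratesContractionSemigroupWrt (N t) (A t) (domA t))

/-- The family `{A(t)}` belongs to the elementary Kato class: every `A(t)` generates a
contraction `C₀`-semigroup on `X`. -/
def ElementaryKatoClass (A : ℝ → X →ₗ[ℂ] X) (domA : ℝ → Submodule ℂ X) : Prop :=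
  ∀ t, 0 ≤ t → GeneratesContractionSemigroup (A t) (domA t)

/-- The family `{A(t)}` belongs to Kato's class: it is Kato-stable, the operators have the
common domain `D` and `A(·)` is strongly `C¹`. -/
def KatoClass (A : ℝ → X →ₗ[ℂ] X) (domA : ℝ → Submodule ℂ X) (D : Submodule ℂ X) : Prop :=
  KatoStable A domA ∧ (∀ t, 0 ≤ t → domA t = D) ∧
  ∀ x ∈ D, ContDiffOn ℝ 1 (fun t => A t x) (Ici (0:ℝ))

/-! ### Boundary control and observation systems -/

/-- Compatibility of the operator `B̃ ∈ L(U,X)` with the boundary control system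
`(𝔄, D(𝔄), 𝔅)`:  `B̃u ∈ D(𝔄)`, `𝔄B̃ ∈ L(U,X)` and `𝔅B̃u = u` for all `u ∈ U`. -/
def BtCompat (Af : X →ₗ[ℂ] X) (domA : Submodule ℂ X) (Bf : X →ₗ[ℂ] U)
    (Bt : U →L[ℂ] X) : Prop :=
  (∀ v : U, Bt v ∈ domA) ∧ (∃ c : ℝ, ∀ v : U, ‖Af (Bt v)‖ ≤ c * ‖v‖) ∧
  ∀ v : U, Bf (Bt v) = v

/-- `Σ(𝔄,𝔅,𝔆)` is a boundary control and observation (BCO) system: the main operator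
`A = 𝔄|_{D(𝔄) ∩ ker 𝔅}` generates a `C₀`-semigroup, there is a compatible `B̃ ∈ L(U,X)`,
and `𝔆` is bounded with respect to the graph norm of `𝔄`. -/
def IsBCO (Af : X →ₗ[ℂ] X) (domA : Submodule ℂ X) (Bf : X →ₗ[ℂ] U) (Cf : X →ₗ[ℂ] Y) :
    Prop :=
  (∃ T : ℝ → X →L[ℂ] X, IsGenerator Af (domA ⊓ LinearMap.ker Bf) T) ∧
  (∃ Bt : U →L[ℂ] X, BtCompat Af domA Bf Bt) ∧
  (∃ c : ℝ, ∀ x ∈ domA, ‖Cf x‖ ≤ c * (‖x‖ + ‖Af x‖))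

/-- A classical solution of the autonomous boundary control problem
`ẋ(t) = 𝔄x(t)`, `𝔅x(t) = u(t)`, `x(0) = x₀`. -/
def IsClassicalSolAut (Af : X →ₗ[ℂ] X) (domA : Submodule ℂ X) (Bf : X →ₗ[ℂ] U)
    (u : ℝ → U) (x₀ : X) (x : ℝ → X) : Prop :=
  x 0 = x₀ ∧ (∀ t, (0:ℝ) ≤ t → x t ∈ domA) ∧
  (∀ t, (0:ℝ) ≤ t → HasDerivWithinAt x (Af (x t)) (Ici (0:ℝ)) t) ∧
  ContinuousOn (fun t => Af (x t)) (Ici (0:ℝ)) ∧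
  ∀ t, (0:ℝ) ≤ t → Bf (x t) = u t

/-- A classical solution pair `(x,y)` of the autonomous BCO system. -/
def IsClassicalSolPairAut (Af : X →ₗ[ℂ] X) (domA : Submodule ℂ X) (Bf : X →ₗ[ℂ] U)
    (Cf : X →ₗ[ℂ] Y) (u : ℝ → U) (x₀ : X) (x : ℝ → X) (y : ℝ → Y) : Prop :=
  IsClassicalSolAut Af domA Bf u x₀ x ∧ ContinuousOn y (Ici (0:ℝ)) ∧
  ∀ t, (0:ℝ) ≤ t → y t = Cf (x t)

/-- A classical solution of the non-autonomous boundary control problem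
`ẋ(t) = 𝔄(t)x(t)`, `𝔅(t)x(t) = u(t)`, `x(s) = xs` on `[s,∞)`. -/
def IsClassicalSolN (Af : ℝ → X →ₗ[ℂ] X) (domA : ℝ → Submodule ℂ X)
    (Bf : ℝ → X →ₗ[ℂ] U) (u : ℝ → U) (s : ℝ) (xs : X) (x : ℝ → X) : Prop :=
  x s = xs ∧ (∀ t, s ≤ t → x t ∈ domA t) ∧
  (∀ t, s ≤ t → HasDerivWithinAt x (Af t (x t)) (Ici s) t) ∧
  ContinuousOn (fun t => Af t (x t)) (Ici s) ∧
  ∀ t, s ≤ t → Bf t (x t) = u t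

/-- A classical solution pair `(x,y)` of the non-autonomous BCO system. -/
def IsClassicalSolPairN (Af : ℝ → X →ₗ[ℂ] X) (domA : ℝ → Submodule ℂ X)
    (Bf : ℝ → X →ₗ[ℂ] U) (Cf : ℝ → X →ₗ[ℂ] Y)
    (u : ℝ → U) (s : ℝ) (xs : X) (x : ℝ → X) (y : ℝ → Y) : Prop :=
  IsClassicalSolN Af domA Bf u s xs x ∧ ContinuousOn y (Ici s) ∧
  ∀ t, s ≤ t → y t = Cf t (x t)

/-- `Σ_N(𝔄,𝔅,𝔆)` is a non-autonomous boundary control and observation (NBCO) system: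
each frozen-time system is a BCO system and the family of main operators generates the
evolution family `W` with regularity spaces `Yreg`. -/
def IsNBCO (Af : ℝ → X →ₗ[ℂ] X) (domA : ℝ → Submodule ℂ X) (Bf : ℝ → X →ₗ[ℂ] U)
    (Cf : ℝ → X →ₗ[ℂ] Y) (W : ℝ → ℝ → X →L[ℂ] X) (Yreg : ℝ → Submodule ℂ X) : Prop :=
  (∀ t, 0 ≤ t → IsBCO (Af t) (domA t) (Bf t) (Cf t)) ∧
  Generates Af (fun t => domA t ⊓ LinearMap.ker (Bf t)) W Yreg

/-- Well-posedness of the non-autonomous BCO system. -/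
def WellPosedN (Af : ℝ → X →ₗ[ℂ] X) (domA : ℝ → Submodule ℂ X) (Bf : ℝ → X →ₗ[ℂ] U)
    (Cf : ℝ → X →ₗ[ℂ] Y) : Prop :=
  ∀ τ : ℝ, 0 < τ → ∃ m : ℝ, 0 < m ∧ ∀ s, 0 ≤ s → s ≤ τ →
    ∀ (u : ℝ → U) (xs : X) (x : ℝ → X) (y : ℝ → Y),
      IsClassicalSolPairN Af domA Bf Cf u s xs x y →
      ‖x τ‖ ^ 2 + ∫ r in s..τ, ‖y r‖ ^ 2 ≤ m * (‖xs‖ ^ 2 + ∫ r in s..τ, ‖u r‖ ^ 2)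

/-- `u ∈ L²_loc([0,∞); V)`. -/
def L2loc {V : Type*} [NormedAddCommGroup V] (u : ℝ → V) : Prop :=
  ∀ T : ℝ, 0 < T →
    AEStronglyMeasurable u (volume.restrict (Icc (0:ℝ) T)) ∧
    IntegrableOn (fun r => ‖u r‖ ^ 2) (Icc (0:ℝ) T)

end NormedDefs

/-! ### Hilbert space notions -/

section HilbertDefs

variable {X U Y V : Type*}
variable [NormedAddCommGroup X] [InnerProductSpace ℂ X]
variable [NormedAddCommGroup U] [InnerProductSpace ℂ U]
variable [NormedAddCommGroup Y] [InnerProductSpace ℂ Y]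
variable [NormedAddCommGroup V] [InnerProductSpace ℂ V]

/-- A family of bounded operators each of which is self-adjoint. -/
def SelfAdjointFamily (M : ℝ → V →L[ℂ] V) : Prop :=
  ∀ t, 0 ≤ t → ∀ x y : V, ⟪M t x, y⟫ = ⟪x, M t y⟫

/-- A uniformly coercive family of bounded operators. -/
def UniformlyCoercive (M : ℝ → V →L[ℂ] V) : Prop :=
  ∃ β : ℝ, 0 < β ∧ ∀ t, 0 ≤ t → ∀ x : V, β * ‖x‖ ^ 2 ≤ (⟪M t x, x⟫).re

/-- `B` (with domain `domB`) is the adjoint of the (densely defined) operator `A`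
(with domain `domA`). -/
def IsAdjointOp (A : X →ₗ[ℂ] X) (domA : Submodule ℂ X) (B : X →ₗ[ℂ] X)
    (domB : Submodule ℂ X) : Prop :=
  (∀ y ∈ domB, ∀ x ∈ domA, ⟪B y, x⟫ = ⟪y, A x⟫) ∧
  (∀ y z : X, (∀ x ∈ domA, ⟪z, x⟫ = ⟪y, A x⟫) → y ∈ domB ∧ z = B y)

/-- The autonomous BCO system `Σ(𝔄,𝔅,𝔆)` is `(P,R,J)`-scattering passive. -/
def ScatteringPassive (Af : X →ₗ[ℂ] X) (domA : Submodule ℂ X) (Bf : X →ₗ[ℂ] U)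
    (Cf : X →ₗ[ℂ] Y) (P : X →L[ℂ] X) (R : U →L[ℂ] U) (J : Y →L[ℂ] Y) : Prop :=
  ∀ (u : ℝ → U) (x₀ : X) (x : ℝ → X) (y : ℝ → Y),
    IsClassicalSolPairAut Af domA Bf Cf u x₀ x y →
    ∀ t, (0:ℝ) ≤ t → ∀ d : ℝ,
      HasDerivWithinAt (fun τ => (⟪P (x τ), x τ⟫).re) d (Ici (0:ℝ)) t →
      d ≤ (⟪R (u t), u t⟫).re - (⟪y t, J (y t)⟫).re

/-- The autonomous BCO system `Σ(𝔄,𝔅,𝔆)` is `(P,R,J)`-scattering energy preserving. -/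
def ScatteringEnergyPreserving (Af : X →ₗ[ℂ] X) (domA : Submodule ℂ X) (Bf : X →ₗ[ℂ] U)
    (Cf : X →ₗ[ℂ] Y) (P : X →L[ℂ] X) (R : U →L[ℂ] U) (J : Y →L[ℂ] Y) : Prop :=
  ∀ (u : ℝ → U) (x₀ : X) (x : ℝ → X) (y : ℝ → Y),
    IsClassicalSolPairAut Af domA Bf Cf u x₀ x y →
    ∀ t, (0:ℝ) ≤ t → ∀ d : ℝ,
      HasDerivWithinAt (fun τ => (⟪P (x τ), x τ⟫).re) d (Ici (0:ℝ)) t →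
      d = (⟪R (u t), u t⟫).re - (⟪y t, J (y t)⟫).re

/-- The non-autonomous BCO system `Σ_N(𝔄,𝔅,𝔆)` is `(R,P,J)`-scattering passive;
here `P'` is the strong derivative of `P`. -/
def NScatteringPassive (Af : ℝ → X →ₗ[ℂ] X) (domA : ℝ → Submodule ℂ X)
    (Bf : ℝ → X →ₗ[ℂ] U) (Cf : ℝ → X →ₗ[ℂ] Y)
    (R : ℝ → U →L[ℂ] U) (P P' : ℝ → X →L[ℂ] X) (J : ℝ → Y →L[ℂ] Y) : Prop :=
  ∀ s, (0:ℝ) ≤ s → ∀ (u : ℝ → U) (xs : X) (x : ℝ → X) (y : ℝ → Y),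
    IsClassicalSolPairN Af domA Bf Cf u s xs x y →
    ∀ t, s ≤ t → ∀ d : ℝ,
      HasDerivWithinAt (fun τ => (⟪P τ (x τ), x τ⟫).re) d (Ici s) t →
      d + (⟪y t, J t (y t)⟫).re ≤ (⟪u t, R t (u t)⟫).re + (⟪P' t (x t), x t⟫).re

/-- The pointwise characterization of `(R,P,J)`-scattering passivity of the non-autonomous
BCO system on the admissible spaces `𝒱(t)`. -/
def NScatteringPassivePointwise (Af : ℝ → X →ₗ[ℂ] X) (domA : ℝ → Submodule ℂ X)
    (Bf : ℝ → X →ₗ[ℂ] U) (Cf : ℝ → X →ₗ[ℂ] Y)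
    (R : ℝ → U →L[ℂ] U) (P : ℝ → X →L[ℂ] X) (J : ℝ → Y →L[ℂ] Y) : Prop :=
  ∀ t, (0:ℝ) ≤ t → ∀ (x : X) (u : U), x ∈ domA t → Bf t x = u →
    2 * (⟪Af t x, P t x⟫).re ≤ (⟪R t u, Bf t x⟫).re - (⟪Cf t x, J t (Cf t x)⟫).re

end HilbertDefs

end NBCS

/-! ### Auxiliary lemmas for Statement 2 -/

open Topology
section Aux

variable {X : Type*} [NormedAddCommGroup X] [NormedSpace ℂ X] [CompleteSpace X]

/-- Uniform bound on a compact set via Banach–Steinhaus. -/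
lemma aux_bound_of_compact {ι : Type*} [TopologicalSpace ι] {K : Set ι}
    (hK : IsCompact K) (R : ι → X →L[ℂ] X)
    (h : ∀ x : X, ContinuousOn (fun i => R i x) K) :
    ∃ C : ℝ, ∀ i ∈ K, ‖R i‖ ≤ C := by
  obtain ⟨C, hC⟩ := banach_steinhaus (E := X) (F := X)
    (g := fun i : K => R i) (fun x => by
      obtain ⟨C, hC⟩ := (isCompact_iff_isCompact_univ.mp hK).exists_bound_of_continuousOn
        (f := fun i : K => R i x) (by
          apply ContinuousOn.mono (s := univ) _ (subset_univ _)
          exact continuousOn_univ.mpr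
            ((h x).comp_continuous continuous_subtype_val (fun i => i.2)))
      exact ⟨C, fun i => hC i (mem_univ i)⟩)
  exact ⟨C, fun i hi => hC ⟨i, hi⟩⟩

/-- Eventual uniform bound along a filter that eventually lives in a compact set. -/
lemma aux_eventually_bound {ι : Type*} [TopologicalSpace ι] {K : Set ι} {l : Filter ι}
    (hK : IsCompact K) (R : ι → X →L[ℂ] X)
    (h : ∀ x : X, ContinuousOn (fun i => R i x) K)
    (hmem : ∀ᶠ i in l, i ∈ K) :
    ∃ C : ℝ, ∀ᶠ i in l, ‖R i‖ ≤ C := by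
  obtain ⟨C, hC⟩ := aux_bound_of_compact hK R h
  exact ⟨C, hmem.mono fun i hi => hC i hi⟩

/-- Moving operator applied to moving vector: limit along a filter. -/
lemma aux_tendsto_apply {ι : Type*} {l : Filter ι}
    (R : ι → X →L[ℂ] X) (R₀ : X →L[ℂ] X)
    (hC : ∃ C : ℝ, ∀ᶠ i in l, ‖R i‖ ≤ C)
    (hR : ∀ y : X, Tendsto (fun i => R i y) l (𝓝 (R₀ y)))
    {h : ι → X} {y₀ : X} (hh : Tendsto h l (𝓝 y₀)) :
    Tendsto (fun i => R i (h i)) l (𝓝 (R₀ y₀)) := by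
  obtain ⟨C, hC⟩ := hC
  rw [tendsto_iff_norm_sub_tendsto_zero]
  apply squeeze_zero' (Eventually.of_forall fun i => norm_nonneg _)
    (hC.mono fun i hCi => ?_)
  · have h1 : Tendsto (fun i => C * ‖h i - y₀‖ + ‖R i y₀ - R₀ y₀‖) l (𝓝 (C * 0 + 0)) := by
      apply Tendsto.add
      · exact tendsto_const_nhds.mul ((tendsto_iff_norm_sub_tendsto_zero).mp hh)
      · exact (tendsto_iff_norm_sub_tendsto_zero).mp (hR y₀)
    simpa using h1
  · calc ‖R i (h i) - R₀ y₀‖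
        ≤ ‖R i (h i) - R i y₀‖ + ‖R i y₀ - R₀ y₀‖ := by
          simpa using norm_add_le (R i (h i) - R i y₀) (R i y₀ - R₀ y₀)
      _ ≤ C * ‖h i - y₀‖ + ‖R i y₀ - R₀ y₀‖ := by
          gcongr
          calc ‖R i (h i) - R i y₀‖ = ‖R i (h i - y₀)‖ := by rw [map_sub]
            _ ≤ ‖R i‖ * ‖h i - y₀‖ := (R i).le_opNorm _
            _ ≤ C * ‖h i - y₀‖ := by gcongr

/-- Eventual bound for a family strongly continuous on `Ici 0`, along a filter
converging to `t₀ ≥ 0` and eventually nonnegative. -/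
lemma aux_eventually_bound_real (R : ℝ → X →L[ℂ] X)
    (hR : ∀ x : X, ContinuousOn (fun t => R t x) (Ici (0:ℝ)))
    {t₀ : ℝ} (ht₀ : 0 ≤ t₀) {l : Filter ℝ} (hl : l ≤ 𝓝 t₀)
    (hmem : ∀ᶠ τ in l, 0 ≤ τ) : ∃ C : ℝ, ∀ᶠ τ in l, ‖R τ‖ ≤ C := by
  apply aux_eventually_bound (K := Icc (t₀ - 1) (t₀ + 1) ∩ Ici 0)
    (isCompact_Icc.inter_right isClosed_Ici) R
    (fun x => (hR x).mono inter_subset_right)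
  filter_upwards [hl ((Icc_mem_nhds_iff (a := t₀ - 1) (b := t₀ + 1)).mpr ⟨by linarith, by linarith⟩), hmem] with τ h1 h2
  exact ⟨h1, h2⟩

/-- Joint continuity of `t ↦ R t (f t)` for strongly continuous locally bounded `R`. -/
lemma aux_continuousOn_apply {ι : Type*} [TopologicalSpace ι] {S : Set ι}
    (R : ι → X →L[ℂ] X)
    (hR : ∀ x : X, ContinuousOn (fun i => R i x) S)
    (hB : ∀ i₀ ∈ S, ∃ C : ℝ, ∀ᶠ i in 𝓝[S] i₀, ‖R i‖ ≤ C)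
    {f : ι → X} (hf : ContinuousOn f S) :
    ContinuousOn (fun i => R i (f i)) S := fun i₀ hi₀ =>
  aux_tendsto_apply R (R i₀) (hB i₀ hi₀) (fun y => hR y i₀ hi₀) (hf i₀ hi₀)

/-- Joint continuity on subsets of `Ici 0` for real one-parameter families. -/
lemma aux_contOn_apply_Ici (R : ℝ → X →L[ℂ] X)
    (hR : ∀ x : X, ContinuousOn (fun t => R t x) (Ici (0:ℝ)))
    {S : Set ℝ} (hS : S ⊆ Ici 0) {f : ℝ → X} (hf : ContinuousOn f S) :
    ContinuousOn (fun t => R t (f t)) S := by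
  apply aux_continuousOn_apply R (fun x => (hR x).mono hS) _ hf
  intro t₀ ht₀
  exact aux_eventually_bound_real R hR (hS ht₀) nhdsWithin_le_nhds
    (eventually_mem_nhdsWithin.mono (fun τ hτ => hS hτ))

end Aux

section QAux

variable {X : Type*} [NormedAddCommGroup X] [NormedSpace ℂ X] [CompleteSpace X]
variable (Q : ℝ → X ≃L[ℂ] X) (Q' : ℝ → X →L[ℂ] X)

lemma aux_Qcont
    (hQdiff : ∀ x : X, ∀ t ∈ Ici (0:ℝ),
      HasDerivWithinAt (fun τ => (Q τ : X →L[ℂ] X) x) (Q' t x) (Ici (0:ℝ)) t) :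
    ∀ x : X, ContinuousOn (fun t => (Q t : X →L[ℂ] X) x) (Ici (0:ℝ)) :=
  fun x t ht => (hQdiff x t ht).continuousWithinAt

lemma aux_qinv_deriv
    (hQdiff : ∀ x : X, ∀ t ∈ Ici (0:ℝ),
      HasDerivWithinAt (fun τ => (Q τ : X →L[ℂ] X) x) (Q' t x) (Ici (0:ℝ)) t)
    (hQinv : ∀ x : X, ContinuousOn (fun t => ((Q t).symm : X →L[ℂ] X) x) (Ici (0:ℝ)))
    (x : X) {t : ℝ} (ht : t ∈ Ici (0:ℝ)) :
    HasDerivWithinAt (fun τ => ((Q τ).symm : X →L[ℂ] X) x)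
      (-(((Q t).symm : X →L[ℂ] X) (Q' t (((Q t).symm : X →L[ℂ] X) x))))
      (Ici (0:ℝ)) t := by
  rw [hasDerivWithinAt_iff_tendsto_slope]
  set z := ((Q t).symm : X →L[ℂ] X) x with hzdef
  have hkey : ∀ τ : ℝ, ((Q τ).symm : X →L[ℂ] X)
      (-(slope (fun σ => (Q σ : X →L[ℂ] X) z) t τ))
      = slope (fun τ => ((Q τ).symm : X →L[ℂ] X) x) t τ := by
    intro τ
    have h1 : ((Q τ).symm : X →L[ℂ] X) ((Q τ : X →L[ℂ] X) z) = z :=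
      (Q τ).symm_apply_apply z
    have h2 : (Q t : X →L[ℂ] X) z = x := (Q t).apply_symm_apply x
    simp only [slope, vsub_eq_sub, ← smul_neg, ContinuousLinearMap.map_smul_of_tower, neg_sub, map_sub, h1, h2]
    rw [hzdef]
  have hb : ∃ C : ℝ, ∀ᶠ τ in 𝓝[Ici (0:ℝ) \ {t}] t, ‖((Q τ).symm : X →L[ℂ] X)‖ ≤ C :=
    aux_eventually_bound_real _ hQinv ht nhdsWithin_le_nhds
      (eventually_mem_nhdsWithin.mono fun τ hτ => hτ.1)
  have hRy : ∀ y : X, Tendsto (fun τ => ((Q τ).symm : X →L[ℂ] X) y)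
      (𝓝[Ici (0:ℝ) \ {t}] t) (𝓝 (((Q t).symm : X →L[ℂ] X) y)) :=
    fun y => (hQinv y t ht).mono_left (nhdsWithin_mono _ diff_subset)
  have hlim : Tendsto (fun τ => -(slope (fun σ => (Q σ : X →L[ℂ] X) z) t τ))
      (𝓝[Ici (0:ℝ) \ {t}] t) (𝓝 (-(Q' t z))) :=
    (hasDerivWithinAt_iff_tendsto_slope.mp (hQdiff z t ht)).neg
  have hmain := (aux_tendsto_apply _ _ hb hRy hlim).congr hkey
  rw [map_neg] at hmain
  exact hmain

lemma aux_tilde_cont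
    (hQ'cont : ∀ x : X, ContinuousOn (fun t => Q' t x) (Ici (0:ℝ)))
    (hQinv : ∀ x : X, ContinuousOn (fun t => ((Q t).symm : X →L[ℂ] X) x) (Ici (0:ℝ))) :
    ∀ x : X, ContinuousOn
      (fun t => -(((Q t).symm : X →L[ℂ] X) (Q' t (((Q t).symm : X →L[ℂ] X) x))))
      (Ici (0:ℝ)) := by
  intro x
  apply ContinuousOn.neg
  exact aux_contOn_apply_Ici _ hQinv (subset_refl _)
    (aux_contOn_apply_Ici _ hQ'cont (subset_refl _) (hQinv x))

lemma aux_sol_transform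
    (hQdiff : ∀ x : X, ∀ t ∈ Ici (0:ℝ),
      HasDerivWithinAt (fun τ => (Q τ : X →L[ℂ] X) x) (Q' t x) (Ici (0:ℝ)) t)
    (hQ'cont : ∀ x : X, ContinuousOn (fun t => Q' t x) (Ici (0:ℝ)))
    (hQinv : ∀ x : X, ContinuousOn (fun t => ((Q t).symm : X →L[ℂ] X) x) (Ici (0:ℝ)))
    (A : ℝ → X →ₗ[ℂ] X) (domA : ℝ → Submodule ℂ X)
    {s : ℝ} (hs : 0 ≤ s) {xs : X} {u : ℝ → X}
    (hu : NBCS.IsClassicalSolution A domA (fun _ => 0) s xs u) :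
    NBCS.IsClassicalSolution
      (fun t => (((Q t).symm : X →L[ℂ] X) : X →ₗ[ℂ] X) ∘ₗ
                  (A t ∘ₗ (((Q t : X →L[ℂ] X)) : X →ₗ[ℂ] X)) -
                (((Q t).symm : X →L[ℂ] X) : X →ₗ[ℂ] X) ∘ₗ ((Q' t : X →ₗ[ℂ] X)))
      (fun t => (domA t).comap (((Q t : X →L[ℂ] X)) : X →ₗ[ℂ] X))
      (fun _ => 0) s ((Q s).symm xs) (fun t => (Q t).symm (u t)) := by
  obtain ⟨hcont, hinit, hdom, hderiv, hAcont⟩ := hu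
  have hIcis : Ici s ⊆ Ici (0:ℝ) := Ici_subset_Ici.mpr hs
  have hIois : Ioi s ⊆ Ici (0:ℝ) := fun τ hτ => le_of_lt (lt_of_le_of_lt hs hτ)
  have hAQ : ∀ (t : ℝ) (y : X),
      ((((Q t).symm : X →L[ℂ] X) : X →ₗ[ℂ] X) ∘ₗ
          (A t ∘ₗ (((Q t : X →L[ℂ] X)) : X →ₗ[ℂ] X)) -
        (((Q t).symm : X →L[ℂ] X) : X →ₗ[ℂ] X) ∘ₗ ((Q' t : X →ₗ[ℂ] X))) y
      = ((Q t).symm : X →L[ℂ] X) (A t ((Q t : X →L[ℂ] X) y) - Q' t y) := by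
    intro t y
    simp [map_sub]
  have hwc : ContinuousOn (fun τ => (Q τ).symm (u τ)) (Ici s) :=
    aux_contOn_apply_Ici _ hQinv hIcis hcont
  refine ⟨hwc, by simp [hinit], ?_, ?_, ?_⟩
  · intro t ht
    simpa [Submodule.mem_comap] using hdom t ht
  · intro t ht
    have ht0 : 0 < t := lt_of_le_of_lt hs ht
    have hu' : HasDerivAt u (A t (u t) + 0) t := hderiv t ht
    set z := (Q t).symm (u t) with hzdef
    have hQtz : (Q t : X →L[ℂ] X) z = u t := (Q t).apply_symm_apply (u t)
    have hQz : HasDerivAt (fun σ => (Q σ : X →L[ℂ] X) z) (Q' t z) t :=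
      (hQdiff z t ht0.le).hasDerivAt (Ici_mem_nhds ht0)
    rw [hasDerivAt_iff_tendsto_slope]
    have hkey : ∀ τ : ℝ, ((Q τ).symm : X →L[ℂ] X)
        (slope u t τ - slope (fun σ => (Q σ : X →L[ℂ] X) z) t τ)
        = slope (fun σ => (Q σ).symm (u σ)) t τ := by
      intro τ
      have h1 : ((Q τ).symm : X →L[ℂ] X) ((Q τ : X →L[ℂ] X) z) = z :=
        (Q τ).symm_apply_apply z
      simp only [slope, vsub_eq_sub, ← smul_sub, ContinuousLinearMap.map_smul_of_tower, map_sub,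
        h1, hQtz, ContinuousLinearEquiv.coe_coe, ContinuousLinearEquiv.symm_apply_apply,
        ← hzdef]
      congr 1
      abel
    have hb : ∃ C : ℝ, ∀ᶠ τ in 𝓝[≠] t, ‖((Q τ).symm : X →L[ℂ] X)‖ ≤ C := by
      apply aux_eventually_bound_real _ hQinv ht0.le nhdsWithin_le_nhds
      have : Ioi (0:ℝ) ∈ 𝓝[≠] t := nhdsWithin_le_nhds (Ioi_mem_nhds ht0)
      exact (eventually_iff.mpr this).mono fun τ hτ => le_of_lt hτ
    have hRy : ∀ y : X, Tendsto (fun τ => ((Q τ).symm : X →L[ℂ] X) y)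
        (𝓝[≠] t) (𝓝 (((Q t).symm : X →L[ℂ] X) y)) :=
      fun y => ((hQinv y t ht0.le).continuousAt (Ici_mem_nhds ht0)).tendsto.mono_left
        nhdsWithin_le_nhds
    have hlim := (hasDerivAt_iff_tendsto_slope.mp hu').sub
      (hasDerivAt_iff_tendsto_slope.mp hQz)
    have hmain := (aux_tendsto_apply _ _ hb hRy hlim).congr hkey
    have hval : ((Q t).symm : X →L[ℂ] X) ((A t (u t) + 0) - Q' t z)
        = ((((Q t).symm : X →L[ℂ] X) : X →ₗ[ℂ] X) ∘ₗ
              (A t ∘ₗ (((Q t : X →L[ℂ] X)) : X →ₗ[ℂ] X)) -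
            (((Q t).symm : X →L[ℂ] X) : X →ₗ[ℂ] X) ∘ₗ ((Q' t : X →ₗ[ℂ] X)))
            ((Q t).symm (u t)) + 0 := by
      rw [hAQ]
      simp [hQtz]
      rw [hzdef]
    rw [← hzdef] at hval
    rw [hval] at hmain
    exact hmain
  · have h1 : ContinuousOn (fun τ => A τ (u τ) + 0) (Ioi s) := hAcont
    have h2 : ContinuousOn (fun τ => Q' τ ((Q τ).symm (u τ))) (Ioi s) :=
      aux_contOn_apply_Ici _ hQ'cont hIois (hwc.mono Ioi_subset_Ici_self)
    have h3 : ContinuousOn (fun τ => ((Q τ).symm : X →L[ℂ] X)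
        ((A τ (u τ) + 0) - Q' τ ((Q τ).symm (u τ)))) (Ioi s) :=
      aux_contOn_apply_Ici _ hQinv hIois (h1.sub h2)
    apply h3.congr
    intro τ hτ
    simp only [hAQ]
    simp

end QAux

section GenAux

variable {X : Type*} [NormedAddCommGroup X] [NormedSpace ℂ X] [CompleteSpace X]
variable (Q : ℝ → X ≃L[ℂ] X) (Q' : ℝ → X →L[ℂ] X)

lemma aux_generates
    (hQdiff : ∀ x : X, ∀ t ∈ Ici (0:ℝ),
      HasDerivWithinAt (fun τ => (Q τ : X →L[ℂ] X) x) (Q' t x) (Ici (0:ℝ)) t)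
    (hQ'cont : ∀ x : X, ContinuousOn (fun t => Q' t x) (Ici (0:ℝ)))
    (hQinv : ∀ x : X, ContinuousOn (fun t => ((Q t).symm : X →L[ℂ] X) x) (Ici (0:ℝ)))
    (A : ℝ → X →ₗ[ℂ] X) (domA : ℝ → Submodule ℂ X) (Yreg : ℝ → Submodule ℂ X)
    (Uev : ℝ → ℝ → X →L[ℂ] X)
    (hG : NBCS.Generates A domA Uev Yreg) :
    NBCS.Generates
      (fun t => (((Q t).symm : X →L[ℂ] X) : X →ₗ[ℂ] X) ∘ₗ
                  (A t ∘ₗ (((Q t : X →L[ℂ] X)) : X →ₗ[ℂ] X)) -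
                (((Q t).symm : X →L[ℂ] X) : X →ₗ[ℂ] X) ∘ₗ ((Q' t : X →ₗ[ℂ] X)))
      (fun t => (domA t).comap (((Q t : X →L[ℂ] X)) : X →ₗ[ℂ] X))
      (fun t s => (((Q t).symm : X →L[ℂ] X).comp (Uev t s)).comp (Q s : X →L[ℂ] X))
      (fun t => (Yreg t).comap (((Q t : X →L[ℂ] X)) : X →ₗ[ℂ] X)) := by
  obtain ⟨⟨hId, hCo, hCont⟩, hDense, hYdom, hInv, hExist, hUniq⟩ := hG
  have hQc := aux_Qcont Q Q' hQdiff
  have hΔ1 : ∀ p : ℝ × ℝ, p ∈ {p : ℝ × ℝ | 0 ≤ p.2 ∧ p.2 ≤ p.1} → (0:ℝ) ≤ p.1 :=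
    fun p hp => hp.1.trans hp.2
  refine ⟨⟨?_, ?_, ?_⟩, ?_, ?_, ?_, ?_, ?_⟩
  · intro t ht
    ext x
    simp [ContinuousLinearMap.comp_apply, hId t ht]
  · intro s r t hs hsr hrt
    ext x
    simp only [ContinuousLinearMap.comp_apply, ContinuousLinearEquiv.coe_coe]
    rw [hCo s r t hs hsr hrt]
    simp [ContinuousLinearMap.comp_apply]
  · intro x
    have hf1 : ContinuousOn (fun p : ℝ × ℝ => (Q p.2 : X →L[ℂ] X) x)
        {p : ℝ × ℝ | 0 ≤ p.2 ∧ p.2 ≤ p.1} :=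
      (hQc x).comp continuous_snd.continuousOn (fun p hp => hp.1)
    have hΔclosed : IsClosed {p : ℝ × ℝ | 0 ≤ p.2 ∧ p.2 ≤ p.1} :=
      (isClosed_le continuous_const continuous_snd).inter
        (isClosed_le continuous_snd continuous_fst)
    have hf2 : ContinuousOn (fun p : ℝ × ℝ => Uev p.1 p.2 ((Q p.2 : X →L[ℂ] X) x))
        {p : ℝ × ℝ | 0 ≤ p.2 ∧ p.2 ≤ p.1} := by
      apply aux_continuousOn_apply (R := fun p : ℝ × ℝ => Uev p.1 p.2) hCont _ hf1
      rintro ⟨t₀, s₀⟩ hp₀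
      apply aux_eventually_bound
        (K := {p : ℝ × ℝ | 0 ≤ p.2 ∧ p.2 ≤ p.1} ∩
          (Icc (t₀ - 1) (t₀ + 1) ×ˢ Icc (s₀ - 1) (s₀ + 1)))
        ((isCompact_Icc.prod isCompact_Icc).inter_left hΔclosed) _
        (fun y => (hCont y).mono inter_subset_left)
      filter_upwards [self_mem_nhdsWithin,
        nhdsWithin_le_nhds (prod_mem_nhds
          ((Icc_mem_nhds_iff (a := t₀ - 1) (b := t₀ + 1)).mpr ⟨by linarith, by linarith⟩)
          ((Icc_mem_nhds_iff (a := s₀ - 1) (b := s₀ + 1)).mpr ⟨by linarith, by linarith⟩))]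
        with p h1 h2
      exact ⟨h1, h2⟩
    have hf3 : ContinuousOn
        (fun p : ℝ × ℝ => ((Q p.1).symm : X →L[ℂ] X) (Uev p.1 p.2 ((Q p.2 : X →L[ℂ] X) x)))
        {p : ℝ × ℝ | 0 ≤ p.2 ∧ p.2 ≤ p.1} := by
      apply aux_continuousOn_apply (R := fun p : ℝ × ℝ => ((Q p.1).symm : X →L[ℂ] X))
        (fun y => (hQinv y).comp continuous_fst.continuousOn hΔ1) _ hf2
      rintro ⟨t₀, s₀⟩ hp₀
      obtain ⟨C, hC⟩ := aux_bound_of_compact (K := Icc (t₀ - 1) (t₀ + 1) ∩ Ici 0)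
        (isCompact_Icc.inter_right isClosed_Ici) (fun τ => ((Q τ).symm : X →L[ℂ] X))
        (fun y => (hQinv y).mono inter_subset_right)
      refine ⟨C, ?_⟩
      filter_upwards [self_mem_nhdsWithin,
        nhdsWithin_le_nhds ((continuous_fst.tendsto (t₀, s₀))
          ((Icc_mem_nhds_iff (a := t₀ - 1) (b := t₀ + 1)).mpr ⟨by linarith, by linarith⟩))]
        with p h1 h2
      exact hC p.1 ⟨h2, hΔ1 p h1⟩
    apply hf3.congr
    intro p hp
    simp [ContinuousLinearMap.comp_apply]
  · intro t ht
    have hd := (hDense t ht).preimage (Q t).toHomeomorph.isOpenMap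
    exact hd
  · intro t ht
    exact Submodule.comap_mono (hYdom t ht)
  · intro s t hs hst x hx
    have hx' : (Q s : X →L[ℂ] X) x ∈ Yreg s := hx
    have := hInv s t hs hst _ hx'
    simpa [Submodule.mem_comap, ContinuousLinearMap.comp_apply] using this
  · intro s hs xs hxs
    have hxs' : (Q s : X →L[ℂ] X) xs ∈ Yreg s := hxs
    have hu := hExist s hs _ hxs'
    have hw := aux_sol_transform Q Q' hQdiff hQ'cont hQinv A domA hs hu
    simpa [ContinuousLinearMap.comp_apply] using hw
  · intro s hs xs hxs x hx t hts
    have htdiff : ∀ y : X, ∀ r ∈ Ici (0:ℝ),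
        HasDerivWithinAt (fun τ => (((Q τ).symm : X ≃L[ℂ] X) : X →L[ℂ] X) y)
          ((-((((Q r).symm : X →L[ℂ] X)).comp
            ((Q' r).comp ((Q r).symm : X →L[ℂ] X)))) y) (Ici (0:ℝ)) r := by
      intro y r hr
      have := aux_qinv_deriv Q Q' hQdiff hQinv y hr
      simpa [ContinuousLinearMap.comp_apply] using this
    have htcont : ∀ y : X, ContinuousOn
        (fun r => (-((((Q r).symm : X →L[ℂ] X)).comp
          ((Q' r).comp ((Q r).symm : X →L[ℂ] X)))) y) (Ici (0:ℝ)) := by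
      intro y
      have := aux_tilde_cont Q Q' hQ'cont hQinv y
      simpa [ContinuousLinearMap.comp_apply] using this
    have htinv : ∀ y : X, ContinuousOn
        (fun τ => ((((Q τ).symm : X ≃L[ℂ] X)).symm : X →L[ℂ] X) y) (Ici (0:ℝ)) := by
      intro y
      simpa [ContinuousLinearEquiv.symm_symm] using hQc y
    have hv := aux_sol_transform (fun r => (Q r).symm)
      (fun r => -((((Q r).symm : X →L[ℂ] X)).comp ((Q' r).comp ((Q r).symm : X →L[ℂ] X))))
      htdiff htcont htinv
      (fun r => (((Q r).symm : X →L[ℂ] X) : X →ₗ[ℂ] X) ∘ₗ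
                  (A r ∘ₗ (((Q r : X →L[ℂ] X)) : X →ₗ[ℂ] X)) -
                (((Q r).symm : X →L[ℂ] X) : X →ₗ[ℂ] X) ∘ₗ ((Q' r : X →ₗ[ℂ] X)))
      (fun r => (domA r).comap (((Q r : X →L[ℂ] X)) : X →ₗ[ℂ] X)) hs hx
    have hv' : NBCS.IsClassicalSolution A domA (fun _ => 0) s ((Q s) xs)
        (fun r => (Q r) (x r)) := by
      obtain ⟨c1, c2, c3, c4, c5⟩ := hv
      refine ⟨?_, ?_, ?_, ?_, ?_⟩
      · simpa using c1
      · simpa using c2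
      · intro r hr
        have := c3 r hr
        simpa [Submodule.mem_comap] using this
      · intro r hr
        have := c4 r hr
        simpa [ContinuousLinearMap.comp_apply, ContinuousLinearMap.neg_apply,
          ContinuousLinearMap.coe_coe, map_sub, map_neg, sub_neg_eq_add] using this
      · have := c5
        apply this.congr
        intro r hr
        simp [ContinuousLinearMap.comp_apply, ContinuousLinearMap.neg_apply,
          map_sub, map_neg, sub_neg_eq_add]
    have hxs' : (Q s : X →L[ℂ] X) xs ∈ Yreg s := hxs
    have heq := hUniq s hs _ hxs' _ hv' t hts
    have hxt : x t = (Q t).symm ((Q t) (x t)) := by simp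
    rw [hxt, heq]
    simp [ContinuousLinearMap.comp_apply]

end GenAux

/-- With `Q` strongly `C¹` (strong derivative `Q'`) and `Q⁻¹` strongly
continuous, and `W(t,s) = Q(t)⁻¹U(t,s)Q(s)`:  `U` is generated by `{A(t)}` with regularity
spaces `{Y_t}` iff `W` is generated by `A_Q = {Q(t)⁻¹A(t)Q(t) − Q(t)⁻¹Q̇(t)}` (with
`D(Q(t)⁻¹A(t)Q(t)) = {x : Q(t)x ∈ D(A(t))}`) with regularity spaces
`Ỹ_t = {x : Q(t)x ∈ Y_t}`. -/
theorem similar_evolution_family_generator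
    {X : Type*} [NormedAddCommGroup X] [NormedSpace ℂ X] [CompleteSpace X]
    (Uev : ℝ → ℝ → X →L[ℂ] X) (hU : NBCS.IsEvolutionFamily Uev)
    (Q : ℝ → X ≃L[ℂ] X) (Q' : ℝ → X →L[ℂ] X)
    (hQdiff : ∀ x : X, ∀ t ∈ Set.Ici (0:ℝ),
      HasDerivWithinAt (fun τ => (Q τ : X →L[ℂ] X) x) (Q' t x) (Set.Ici (0:ℝ)) t)
    (hQ'cont : ∀ x : X, ContinuousOn (fun t => Q' t x) (Set.Ici (0:ℝ)))
    (hQinv : ∀ x : X, ContinuousOn (fun t => ((Q t).symm : X →L[ℂ] X) x) (Set.Ici (0:ℝ)))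
    (A : ℝ → X →ₗ[ℂ] X) (domA : ℝ → Submodule ℂ X) (Yreg : ℝ → Submodule ℂ X) :
    NBCS.Generates A domA Uev Yreg ↔
      NBCS.Generates
        (fun t => (((Q t).symm : X →L[ℂ] X) : X →ₗ[ℂ] X) ∘ₗ
                    (A t ∘ₗ (((Q t : X →L[ℂ] X)) : X →ₗ[ℂ] X)) -
                  (((Q t).symm : X →L[ℂ] X) : X →ₗ[ℂ] X) ∘ₗ ((Q' t : X →ₗ[ℂ] X)))
        (fun t => (domA t).comap (((Q t : X →L[ℂ] X)) : X →ₗ[ℂ] X))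
        (fun t s => (((Q t).symm : X →L[ℂ] X).comp (Uev t s)).comp (Q s : X →L[ℂ] X))
        (fun t => (Yreg t).comap (((Q t : X →L[ℂ] X)) : X →ₗ[ℂ] X)) := by
  constructor
  · intro h
    exact aux_generates Q Q' hQdiff hQ'cont hQinv A domA Yreg Uev h
  · intro h
    have hQc := aux_Qcont Q Q' hQdiff
    have htdiff : ∀ y : X, ∀ r ∈ Set.Ici (0:ℝ),
        HasDerivWithinAt (fun τ => (((Q τ).symm : X ≃L[ℂ] X) : X →L[ℂ] X) y)
          ((-((((Q r).symm : X →L[ℂ] X)).comp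
            ((Q' r).comp ((Q r).symm : X →L[ℂ] X)))) y) (Set.Ici (0:ℝ)) r := by
      intro y r hr
      simpa [ContinuousLinearMap.comp_apply] using aux_qinv_deriv Q Q' hQdiff hQinv y hr
    have htcont : ∀ y : X, ContinuousOn
        (fun r => (-((((Q r).symm : X →L[ℂ] X)).comp
          ((Q' r).comp ((Q r).symm : X →L[ℂ] X)))) y) (Set.Ici (0:ℝ)) := by
      intro y
      simpa [ContinuousLinearMap.comp_apply] using aux_tilde_cont Q Q' hQ'cont hQinv y
    have htinv : ∀ y : X, ContinuousOn
        (fun τ => ((((Q τ).symm : X ≃L[ℂ] X)).symm : X →L[ℂ] X) y) (Set.Ici (0:ℝ)) := by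
      intro y
      simpa [ContinuousLinearEquiv.symm_symm] using hQc y
    have h2 := aux_generates (fun r => (Q r).symm)
      (fun r => -((((Q r).symm : X →L[ℂ] X)).comp ((Q' r).comp ((Q r).symm : X →L[ℂ] X))))
      htdiff htcont htinv _ _ _ _ h
    convert h2 using 1
    · funext r
      apply LinearMap.ext
      intro y
      simp [ContinuousLinearMap.comp_apply, ContinuousLinearEquiv.symm_symm, map_sub,
        sub_neg_eq_add]
    · funext r
      ext y
      simp [Submodule.mem_comap]
    · funext t s
      ext y
      simp [ContinuousLinearMap.comp_apply]
    · funext r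
      ext y
      simp [Submodule.mem_comap]
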